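/- Let g_u, g_r ∈ ℝ^n with g_r ≠ 0, and let ε ≥ 0. Then strong duality holds for the utility-preserving direction problem: the maximum of ⟨g_u, d⟩ − (1/2)‖d‖² over {d ∈ ℝ^n : ⟨g_r, d⟩ ≥ −ε} equals the minimum over λ ∈ [0, ∞) of (1/2)‖g_u + λ g_r‖² + λ ε. -/

import Mathlib

open scoped RealInnerProductSpace BigOperators

/-- Weak duality: every feasible primal value is at most every dual value. -/
lemma weak_duality_aux {n : ℕ}
    (gu gr : EuclideanSpace ℝ (Fin n)) (ε : ℝ)
    (d : EuclideanSpace ℝ (Fin n)) (lam : ℝ) (hlam : 0 ≤ lam)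
    (hd : ⟪gr, d⟫ ≥ -ε) :
    ⟪gu, d⟫ - (1 / 2) * ‖d‖ ^ 2 ≤ (1 / 2) * ‖gu + lam • gr‖ ^ 2 + lam * ε := by
  have h0 : (0:ℝ) ≤ ‖(gu + lam • gr) - d‖ ^ 2 := sq_nonneg _
  have hexp : ‖(gu + lam • gr) - d‖ ^ 2
      = ‖gu + lam • gr‖ ^ 2 - 2 * ⟪gu + lam • gr, d⟫ + ‖d‖ ^ 2 := by
    rw [← real_inner_self_eq_norm_sq, ← real_inner_self_eq_norm_sq,
      ← real_inner_self_eq_norm_sq]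
    simp only [inner_sub_left, inner_sub_right]
    rw [real_inner_comm d (gu + lam • gr)]
    ring
  have hinner : ⟪gu + lam • gr, d⟫ = ⟪gu, d⟫ + lam * ⟪gr, d⟫ := by
    rw [inner_add_left, real_inner_smul_left]
  nlinarith [mul_le_mul_of_nonneg_left hd hlam]

/-- Strong duality for the utility-preserving direction problem:
the maximum of `⟨g_u, d⟩ − (1/2)‖d‖²` over `{d : ⟨g_r, d⟩ ≥ −ε}` equals the
minimum over `λ ∈ [0, ∞)` of `(1/2)‖g_u + λ g_r‖² + λ ε`. -/
theorem strong_duality_direction_problem {n : ℕ}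
    (gu gr : EuclideanSpace ℝ (Fin n)) (hgr : gr ≠ 0) (ε : ℝ) (hε : 0 ≤ ε) :
    ∃ v : ℝ,
      IsGreatest ((fun d : EuclideanSpace ℝ (Fin n) =>
          ⟪gu, d⟫ - (1 / 2) * ‖d‖ ^ 2) ''
        {d : EuclideanSpace ℝ (Fin n) | ⟪gr, d⟫ ≥ -ε}) v ∧
      IsLeast ((fun lam : ℝ =>
          (1 / 2) * ‖gu + lam • gr‖ ^ 2 + lam * ε) '' Set.Ici 0) v := by
  -- choose the optimal multiplier
  set lam : ℝ := if ⟪gr, gu⟫ ≥ -ε then 0 else -(⟪gr, gu⟫ + ε) / ‖gr‖ ^ 2 with hlamdef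
  have hgrn : (0:ℝ) < ‖gr‖ ^ 2 := by
    have := norm_pos_iff.mpr hgr
    positivity
  have hlam : 0 ≤ lam := by
    rw [hlamdef]
    split_ifs with h
    · exact le_refl 0
    · push_neg at h
      have h2 : 0 ≤ -(⟪gr, gu⟫ + ε) := by linarith
      exact div_nonneg h2 hgrn.le
  set dstar : EuclideanSpace ℝ (Fin n) := gu + lam • gr with hdstar
  have hinner_dstar : ⟪gr, dstar⟫ = ⟪gr, gu⟫ + lam * ‖gr‖ ^ 2 := by
    rw [hdstar, inner_add_right, real_inner_smul_right, real_inner_self_eq_norm_sq]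
  have hfeas : ⟪gr, dstar⟫ ≥ -ε := by
    rw [hinner_dstar, hlamdef]
    split_ifs with h
    · simpa using h
    · push_neg at h
      field_simp
      linarith
  -- equality of primal and dual values at (dstar, lam)
  have heq : ⟪gu, dstar⟫ - (1 / 2) * ‖dstar‖ ^ 2
      = (1 / 2) * ‖gu + lam • gr‖ ^ 2 + lam * ε := by
    have h1 : ⟪gu, dstar⟫ = ‖gu‖ ^ 2 + lam * ⟪gu, gr⟫ := by
      rw [hdstar, inner_add_right, real_inner_smul_right, real_inner_self_eq_norm_sq]
    have h2 : ‖dstar‖ ^ 2 = ‖gu‖ ^ 2 + 2 * lam * ⟪gu, gr⟫ + lam ^ 2 * ‖gr‖ ^ 2 := by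
      rw [hdstar, ← real_inner_self_eq_norm_sq]
      simp only [inner_add_left, inner_add_right, real_inner_smul_left,
        real_inner_smul_right, real_inner_self_eq_norm_sq]
      rw [real_inner_comm gr gu, norm_smul, mul_pow, Real.norm_eq_abs, sq_abs]
      ring
    have hcomp : lam * (⟪gr, gu⟫ + lam * ‖gr‖ ^ 2 + ε) = 0 := by
      rw [hlamdef]
      split_ifs with h
      · ring
      · push_neg at h
        field_simp
        ring
    have hsym : ⟪gr, gu⟫ = ⟪gu, gr⟫ := real_inner_comm gu gr
    rw [← hdstar, h1, h2]
    nlinarith [hcomp, hsym]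
  refine ⟨⟪gu, dstar⟫ - (1 / 2) * ‖dstar‖ ^ 2, ⟨⟨dstar, hfeas, rfl⟩, ?_⟩, ?_⟩
  · rintro y ⟨d, hd, rfl⟩
    calc ⟪gu, d⟫ - (1 / 2) * ‖d‖ ^ 2
        ≤ (1 / 2) * ‖gu + lam • gr‖ ^ 2 + lam * ε := weak_duality_aux gu gr ε d lam hlam hd
      _ = _ := heq.symm
  · refine ⟨⟨lam, hlam, heq.symm⟩, ?_⟩
    rintro y ⟨mu, hmu, rfl⟩
    exact weak_duality_aux gu gr ε dstar mu hmu hfeas
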